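/- Let α ∈ (0,2), let (λ_k)_{k≥1} be strictly positive real numbers, let (σ_k)_{k≥1} be real numbers, and let ρ be the Borel measure on ℝ with density β ↦ (1/2)|β|^{−1−α} with respect to Lebesgue measure (the Lévy measure of a symmetric α-stable process). Then ∑_{k=1}^∞ ∫₀^∞ ∫_ℝ ( e^{−2λ_k s} σ_k² β² ∧ 1 ) ρ(dβ) ds < ∞ if and only if ∑_{k=1}^∞ |σ_k|^α / λ_k < ∞. -/

import Mathlib

open MeasureTheory Filter Topology
open scoped ENNReal

section Aux

open Set Real

private lemma stmt16_scale (α : ℝ) (t : ℝ) (ht : 0 < t) :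
    (∫⁻ β : ℝ, ENNReal.ofReal (1/2 * |β| ^ (-1-α)) * ENNReal.ofReal (min ((t*β)^2) 1))
      = ENNReal.ofReal (t ^ α) *
        ∫⁻ β : ℝ, ENNReal.ofReal (1/2 * |β| ^ (-1-α)) * ENNReal.ofReal (min (β^2) 1) := by
  set φ : ℝ → ℝ≥0∞ := fun u => ENNReal.ofReal (1/2 * |u| ^ (-1-α)) * ENNReal.ofReal (min (u^2) 1)
    with hφ
  have hφm : Measurable φ := by fun_prop
  have h2 : t ^ (1+α) * t ^ (-1-α) = 1 := by
    rw [← Real.rpow_add ht]; norm_num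
  have key : ∀ β : ℝ, ENNReal.ofReal (1/2 * |β| ^ (-1-α)) * ENNReal.ofReal (min ((t*β)^2) 1)
      = ENNReal.ofReal (t ^ (1+α)) * φ (t*β) := by
    intro β
    have habs : |t*β| ^ (-1-α) = t ^ (-1-α) * |β| ^ (-1-α) := by
      rw [abs_mul, abs_of_pos ht, Real.mul_rpow ht.le (abs_nonneg _)]
    have hkey : t ^ (1+α) * (1/2 * (t ^ (-1-α) * |β| ^ (-1-α))) = 1/2 * |β| ^ (-1-α) := by
      linear_combination (1/2 * |β| ^ (-1-α)) * h2
    rw [hφ]; simp only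
    rw [habs, ← mul_assoc, ← ENNReal.ofReal_mul (p := t ^ (1+α)) (by positivity), hkey]
  simp_rw [key]
  have hcomp : Measurable fun β : ℝ => φ (t*β) := hφm.comp (measurable_const_mul t)
  rw [lintegral_const_mul _ hcomp]
  have hmap : (∫⁻ β : ℝ, φ (t*β)) = ENNReal.ofReal |t⁻¹| * ∫⁻ u, φ u := by
    rw [← lintegral_map hφm (by fun_prop : Measurable fun β : ℝ => t*β)]
    rw [show (fun β : ℝ => t*β) = (t * ·) from rfl, Real.map_volume_mul_left ht.ne',
      lintegral_smul_measure, smul_eq_mul]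
  rw [hmap, ← mul_assoc, ← ENNReal.ofReal_mul (by positivity)]
  congr 2
  rw [abs_of_pos (by positivity), ← Real.rpow_neg_one t, ← Real.rpow_add ht]
  norm_num

private lemma stmt16_Fpos (α : ℝ) (hα0 : 0 < α) :
    0 < ∫⁻ β : ℝ, ENNReal.ofReal (1/2 * |β| ^ (-1-α)) * ENNReal.ofReal (min (β^2) 1) := by
  have hc : (0:ℝ) < 1/2 * 2 ^ (-1-α) := by positivity
  calc (0:ℝ≥0∞) < ENNReal.ofReal (1/2 * 2 ^ (-1-α)) * volume (Icc (1:ℝ) 2) := by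
        rw [Real.volume_Icc]
        exact ENNReal.mul_pos (ENNReal.ofReal_pos.2 hc).ne' (by norm_num)
    _ = ∫⁻ _ in Icc (1:ℝ) 2, ENNReal.ofReal (1/2 * 2 ^ (-1-α)) := by
        rw [setLIntegral_const]
    _ ≤ ∫⁻ β in Icc (1:ℝ) 2, ENNReal.ofReal (1/2 * |β| ^ (-1-α)) * ENNReal.ofReal (min (β^2) 1) := by
        refine setLIntegral_mono (by fun_prop) fun β hβ => ?_
        obtain ⟨h1, h2⟩ := hβ
        have hmin : min (β^2) 1 = 1 := min_eq_right (by nlinarith)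
        rw [hmin, ENNReal.ofReal_one, mul_one]
        refine ENNReal.ofReal_le_ofReal ?_
        have : (2:ℝ) ^ (-1-α) ≤ |β| ^ (-1-α) := by
          rw [abs_of_pos (by linarith)]
          exact Real.rpow_le_rpow_of_nonpos (by linarith) h2 (by linarith)
        linarith
    _ ≤ _ := setLIntegral_le_lintegral _ _

private lemma stmt16_Ffin (α : ℝ) (hα0 : 0 < α) (hα2 : α < 2) :
    (∫⁻ β : ℝ, ENNReal.ofReal (1/2 * |β| ^ (-1-α)) * ENNReal.ofReal (min (β^2) 1)) < ⊤ := by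
  set φ : ℝ → ℝ≥0∞ := fun u => ENNReal.ofReal (1/2 * |u| ^ (-1-α)) * ENNReal.ofReal (min (u^2) 1)
    with hφ
  have hφm : Measurable φ := by fun_prop
  have h1 : (∫⁻ β in Ioc (0:ℝ) 1, φ β) < ⊤ := by
    have hb : IntegrableOn (fun β : ℝ => 1/2 * β ^ (1-α)) (Ioc 0 1) := by
      have := (intervalIntegral.intervalIntegrable_rpow' (a := 0) (b := 1) (r := 1-α)
        (by linarith))
      rw [intervalIntegrable_iff_integrableOn_Ioc_of_le zero_le_one] at this
      exact this.const_mul _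
    calc (∫⁻ β in Ioc (0:ℝ) 1, φ β)
        ≤ ∫⁻ β in Ioc (0:ℝ) 1, ENNReal.ofReal (1/2 * β ^ (1-α)) := by
          refine setLIntegral_mono (by fun_prop) fun β hβ => ?_
          obtain ⟨hβ0, hβ1⟩ := hβ
          rw [hφ]; simp only
          rw [← ENNReal.ofReal_mul (by positivity)]
          refine ENNReal.ofReal_le_ofReal ?_
          have h1 : min (β^2) 1 ≤ β^2 := min_le_left _ _
          have h2 : |β| = β := abs_of_pos hβ0
          have h3 : β ^ (-1-α) * β^2 = β ^ (1-α) := by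
            rw [← Real.rpow_natCast β 2, ← Real.rpow_add hβ0]
            congr 1
            push_cast
            ring
          calc 1/2 * |β| ^ (-1-α) * min (β^2) 1 ≤ 1/2 * β ^ (-1-α) * β^2 := by
                rw [h2]
                have : (0:ℝ) ≤ β ^ (-1-α) := (Real.rpow_pos_of_pos hβ0 _).le
                nlinarith
            _ = 1/2 * β ^ (1-α) := by rw [mul_assoc, h3]
      _ ≤ ∫⁻ β in Ioc (0:ℝ) 1, ‖1/2 * β ^ (1-α)‖ₑ :=
          lintegral_mono fun x => Real.ofReal_le_enorm _
      _ < ⊤ := hb.hasFiniteIntegral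
  have h2 : (∫⁻ β in Ioi (1:ℝ), φ β) < ⊤ := by
    have hb : IntegrableOn (fun β : ℝ => 1/2 * β ^ (-1-α)) (Ioi 1) :=
      (integrableOn_Ioi_rpow_of_lt (by linarith) zero_lt_one).const_mul _
    calc (∫⁻ β in Ioi (1:ℝ), φ β)
        ≤ ∫⁻ β in Ioi (1:ℝ), ENNReal.ofReal (1/2 * β ^ (-1-α)) := by
          refine setLIntegral_mono (by fun_prop) fun β hβ => ?_
          rw [hφ]; simp only
          have hβ0 : (0:ℝ) < β := lt_trans zero_lt_one hβ
          calc ENNReal.ofReal (1/2 * |β| ^ (-1-α)) * ENNReal.ofReal (min (β^2) 1)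
              ≤ ENNReal.ofReal (1/2 * |β| ^ (-1-α)) * 1 := by
                gcongr
                exact ENNReal.ofReal_le_one.2 (min_le_right _ _)
            _ = ENNReal.ofReal (1/2 * β ^ (-1-α)) := by rw [mul_one, abs_of_pos hβ0]
      _ ≤ ∫⁻ β in Ioi (1:ℝ), ‖1/2 * β ^ (-1-α)‖ₑ :=
          lintegral_mono fun x => Real.ofReal_le_enorm _
      _ < ⊤ := hb.hasFiniteIntegral
  have hIoi : (∫⁻ β in Ioi (0:ℝ), φ β) < ⊤ := by
    rw [← Ioc_union_Ioi_eq_Ioi (zero_le_one (α := ℝ)),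
      lintegral_union measurableSet_Ioi Ioc_disjoint_Ioi_same]
    exact ENNReal.add_lt_top.2 ⟨h1, h2⟩
  have hneg : (∫⁻ β in Iic (0:ℝ), φ β) = ∫⁻ β in Ici (0:ℝ), φ β := by
    have h : (∫⁻ β in Iic (0:ℝ), φ β)
        = ∫⁻ β in Iic (0:ℝ), φ β ∂(Measure.map Neg.neg volume) := by
      rw [Measure.map_neg_eq_self]
    rw [h, setLIntegral_map measurableSet_Iic hφm measurable_neg]
    have hpre : (Neg.neg ⁻¹' Iic (0:ℝ)) = Ici 0 := by
      ext x; simp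
    rw [hpre]
    refine setLIntegral_congr_fun measurableSet_Ici (fun x _ => ?_)
    rw [hφ]; simp
  have hIci : (∫⁻ β in Ici (0:ℝ), φ β) = ∫⁻ β in Ioi (0:ℝ), φ β :=
    setLIntegral_congr Ioi_ae_eq_Ici.symm
  have htot := lintegral_add_compl φ (measurableSet_Iic : MeasurableSet (Iic (0:ℝ))) (μ := volume)
  rw [compl_Iic] at htot
  calc lintegral volume φ = (∫⁻ β in Iic (0:ℝ), φ β) + ∫⁻ β in Ioi 0, φ β := htot.symm
    _ < ⊤ := by rw [hneg, hIci]; exact ENNReal.add_lt_top.2 ⟨hIoi, hIoi⟩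

private lemma stmt16_expInt (b : ℝ) (hb : 0 < b) :
    ∫⁻ s in Ioi (0:ℝ), ENNReal.ofReal (Real.exp (-(b*s))) = ENNReal.ofReal (1/b) := by
  have hint : IntegrableOn (fun s : ℝ => Real.exp (-(b*s))) (Ioi 0) := by
    simpa [neg_mul] using exp_neg_integrableOn_Ioi 0 hb
  rw [← ofReal_integral_eq_lintegral_ofReal hint
    (Filter.Eventually.of_forall fun x => (Real.exp_pos _).le)]
  congr 1
  have := Real.integral_rpow_mul_exp_neg_mul_Ioi (a := 1) zero_lt_one hb
  simpa [Real.Gamma_one, Real.rpow_natCast] using this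

private lemma stmt16_sumIff (g : ℕ → ℝ) (hg : ∀ k, 0 ≤ g k) :
    (∑' k, ENNReal.ofReal (g k)) < ⊤ ↔ Summable g := by
  rw [lt_top_iff_ne_top]
  have h1 : ∀ k, ENNReal.ofReal (g k) = ((g k).toNNReal : ℝ≥0∞) := fun k => rfl
  simp_rw [h1]
  rw [ENNReal.tsum_coe_ne_top_iff_summable, ← NNReal.summable_coe]
  constructor
  · intro h
    refine h.congr fun k => ?_
    exact Real.coe_toNNReal _ (hg k)
  · intro h
    refine h.congr fun k => ?_
    exact (Real.coe_toNNReal _ (hg k)).symm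

end Aux

/-- For the symmetric `α`-stable Lévy measure `ρ(dβ) = (1/2)|β|^{-1-α} dβ`:
`∑_k ∫₀^∞ ∫ (e^{-2λ_k s}σ_k²β² ∧ 1) ρ(dβ) ds < ∞` if and only if
`∑_k |σ_k|^α/λ_k < ∞`. -/
theorem stmt16
    (α : ℝ) (hα0 : 0 < α) (hα2 : α < 2)
    (lam : ℕ → ℝ) (hpos : ∀ k, 0 < lam k) (σ : ℕ → ℝ) :
    (∑' k : ℕ, ∫⁻ s in Set.Ioi (0 : ℝ), ∫⁻ β,
        ENNReal.ofReal (min (Real.exp (-(2 * lam k * s)) * (σ k) ^ 2 * β ^ 2) 1)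
          ∂(volume.withDensity fun β : ℝ => ENNReal.ofReal (1 / 2 * |β| ^ (-1 - α)))) < ⊤
      ↔ Summable fun k => |σ k| ^ α / lam k := by
  classical
  set F1 : ℝ≥0∞ :=
    ∫⁻ β : ℝ, ENNReal.ofReal (1/2 * |β| ^ (-1-α)) * ENNReal.ofReal (min (β^2) 1) with hF1
  have hF1pos : 0 < F1 := stmt16_Fpos α hα0
  have hF1fin : F1 < ⊤ := stmt16_Ffin α hα0 hα2
  have hwm : Measurable fun β : ℝ => ENNReal.ofReal (1 / 2 * |β| ^ (-1 - α)) := by fun_prop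
  -- inner integral computation
  have hinner : ∀ k, ∀ s ∈ Set.Ioi (0:ℝ),
      (∫⁻ β, ENNReal.ofReal (min (Real.exp (-(2 * lam k * s)) * (σ k) ^ 2 * β ^ 2) 1)
        ∂(volume.withDensity fun β : ℝ => ENNReal.ofReal (1 / 2 * |β| ^ (-1 - α))))
      = ENNReal.ofReal (Real.exp (-(α * lam k * s))) * (ENNReal.ofReal (|σ k| ^ α) * F1) := by
    intro k s _
    rw [lintegral_withDensity_eq_lintegral_mul volume hwm (by fun_prop)]
    simp only [Pi.mul_apply]
    by_cases hσ : σ k = 0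
    · simp [hσ, Real.zero_rpow hα0.ne']
    · set t : ℝ := Real.exp (-(lam k * s)) * |σ k| with htdef
      have ht : 0 < t := by positivity
      have hexp : Real.exp (-(lam k * s)) ^ 2 = Real.exp (-(2 * lam k * s)) := by
        rw [sq, ← Real.exp_add]
        congr 1
        ring
      have hsq : ∀ β : ℝ, Real.exp (-(2 * lam k * s)) * (σ k) ^ 2 * β ^ 2 = (t*β)^2 := by
        intro β
        rw [htdef, mul_pow, mul_pow, sq_abs, hexp]
      simp_rw [hsq]
      rw [stmt16_scale α t ht]
      have htα : t ^ α = Real.exp (-(α * lam k * s)) * |σ k| ^ α := by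
        rw [htdef, Real.mul_rpow (Real.exp_pos _).le (abs_nonneg _), ← Real.exp_mul]
        congr 2
        ring
      rw [htα, ENNReal.ofReal_mul (Real.exp_pos _).le, mul_assoc]
  -- outer integral computation
  have houter : ∀ k,
      (∫⁻ s in Set.Ioi (0:ℝ), ∫⁻ β,
        ENNReal.ofReal (min (Real.exp (-(2 * lam k * s)) * (σ k) ^ 2 * β ^ 2) 1)
          ∂(volume.withDensity fun β : ℝ => ENNReal.ofReal (1 / 2 * |β| ^ (-1 - α))))
      = ENNReal.ofReal (|σ k| ^ α / (α * lam k)) * F1 := by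
    intro k
    have hal : 0 < α * lam k := mul_pos hα0 (hpos k)
    rw [setLIntegral_congr_fun measurableSet_Ioi
      (fun s hs => hinner k s hs)]
    rw [lintegral_mul_const _ (by fun_prop)]
    rw [stmt16_expInt (α * lam k) hal]
    rw [← mul_assoc, ← ENNReal.ofReal_mul (one_div_pos.2 hal).le]
    congr 2
    ring
  simp_rw [houter]
  rw [ENNReal.tsum_mul_right]
  have hstep : (∑' k, ENNReal.ofReal (|σ k| ^ α / (α * lam k))) * F1 < ⊤
      ↔ (∑' k, ENNReal.ofReal (|σ k| ^ α / (α * lam k))) < ⊤ := by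
    constructor
    · intro h
      by_contra hc
      rw [not_lt, top_le_iff] at hc
      rw [hc, ENNReal.top_mul hF1pos.ne'] at h
      exact (lt_irrefl _ h).elim
    · intro h
      exact ENNReal.mul_lt_top h hF1fin
  rw [hstep, stmt16_sumIff _ (fun k => div_nonneg (Real.rpow_nonneg (abs_nonneg _) _) (mul_pos hα0 (hpos k)).le)]
  have heq : (fun k => |σ k| ^ α / (α * lam k)) = fun k => α⁻¹ * (|σ k| ^ α / lam k) := by
    funext k
    ring
  rw [heq, summable_mul_left_iff (inv_pos.2 hα0).ne']
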